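/- Define the sequence H : ℕ → ℤ by H(0) = 1, H(1) = 1, and H(q) = 17·H(q−1) − H(q−2) − 3 for q ≥ 2. Then H(q) > 0 for all q, and the ratio H(q)/H(q−1) converges, with limit lim_{q→∞} H(q)/H(q−1) = (17 + √285)/2. -/

import Mathlib

open Filter Topology

/-- H(q) = m_{(q−1)/q}: H(0) = 1, H(1) = 1, H(q) = 17·H(q−1) − H(q−2) − 3. -/
def H : ℕ → ℤ
  | 0 => 1
  | 1 => 1
  | (n + 2) => 17 * H (n + 1) - H n - 3

namespace GMaux

noncomputable def s : ℝ := Real.sqrt 285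
noncomputable def lam : ℝ := (17 + s) / 2
noncomputable def mu : ℝ := (17 - s) / 2
noncomputable def a : ℝ := (1 - mu) / s
noncomputable def b : ℝ := (lam - 1) / s

lemma hs2 : s * s = 285 := Real.mul_self_sqrt (by norm_num)
lemma hspos : 0 < s := Real.sqrt_pos.mpr (by norm_num)
lemma hslt : s < 17 := by nlinarith [hs2, hspos]
lemma hsgt : 15 < s := by nlinarith [hs2, hspos]

lemma hmupos : 0 < mu := by unfold mu; linarith [hslt]
lemma hmu1 : mu < 1 := by unfold mu; linarith [hsgt]
lemma hlam1 : 1 < lam := by unfold lam; linarith [hsgt]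
lemma hlampos : 0 < lam := by linarith [hlam1]
lemma hlm : lam * mu = 1 := by
  unfold lam mu; linear_combination (-1/4 : ℝ) * hs2
lemma hapos : 0 < a := by
  unfold a; exact div_pos (by linarith [hmu1]) hspos
lemma hbpos : 0 < b := by
  unfold b; exact div_pos (by linarith [hlam1]) hspos
lemma hab : a + b = 1 := by
  have h : (1 - mu) + (lam - 1) = s := by unfold lam mu; ring
  unfold a b; rw [← add_div, h, div_self (ne_of_gt hspos)]
lemma hab2 : a * lam + b * mu = 1 := by
  have h : (1 - mu) * lam + (lam - 1) * mu = s := by unfold lam mu; ring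
  unfold a b
  rw [div_mul_eq_mul_div, div_mul_eq_mul_div, ← add_div, h,
    div_self (ne_of_gt hspos)]
lemma hlamsq : lam ^ 2 = 17 * lam - 1 := by
  unfold lam; linear_combination (1/4 : ℝ) * hs2
lemma hmusq : mu ^ 2 = 17 * mu - 1 := by
  unfold mu; linear_combination (1/4 : ℝ) * hs2

lemma closed : ∀ n, 5 * (H n : ℝ) = 4 * (a * lam ^ n + b * mu ^ n) + 1 := by
  have key : ∀ n, 5 * (H n : ℝ) = 4 * (a * lam ^ n + b * mu ^ n) + 1 ∧
      5 * (H (n + 1) : ℝ) = 4 * (a * lam ^ (n + 1) + b * mu ^ (n + 1)) + 1 := by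
    intro n
    induction n with
    | zero =>
      constructor
      · simp [H]; linarith [hab]
      · show 5 * ((H 1 : ℤ) : ℝ) = _
        simp [H]; linarith [hab2]
    | succ n ih =>
      obtain ⟨h1, h2⟩ := ih
      refine ⟨h2, ?_⟩
      have hrec : (H (n + 2) : ℝ) = 17 * (H (n + 1) : ℝ) - (H n : ℝ) - 3 := by
        show ((H (n + 2) : ℤ) : ℝ) = _
        rw [show H (n + 2) = 17 * H (n + 1) - H n - 3 from rfl]
        push_cast; ring
      have hl : lam ^ (n + 2) = 17 * lam ^ (n + 1) - lam ^ n := by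
        have : lam ^ (n + 2) = lam ^ n * lam ^ 2 := by ring
        rw [this, hlamsq]; ring
      have hm : mu ^ (n + 2) = 17 * mu ^ (n + 1) - mu ^ n := by
        have : mu ^ (n + 2) = mu ^ n * mu ^ 2 := by ring
        rw [this, hmusq]; ring
      rw [hrec, hl, hm]; linarith [h1, h2]
  exact fun n => (key n).1

end GMaux

open GMaux in
/-- All H(q) are positive, and H(q)/H(q−1) → (17 + √285)/2 as q → ∞. -/
theorem gen_markov_q_minus_one_over_q_ratio_limit :
    (∀ q, 0 < H q) ∧
    Tendsto (fun q : ℕ => (H (q + 1) : ℝ) / (H q : ℝ)) atTop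
      (𝓝 ((17 + Real.sqrt 285) / 2)) := by
  have pos : ∀ q, 1 ≤ H q ∧ H q ≤ H (q + 1) := by
    intro q
    induction q with
    | zero => exact ⟨le_refl 1, le_refl 1⟩
    | succ n ih =>
      obtain ⟨h1, h2⟩ := ih
      refine ⟨le_trans h1 h2, ?_⟩
      have : H (n + 2) = 17 * H (n + 1) - H n - 3 := rfl
      rw [this]; linarith
  refine ⟨fun q => lt_of_lt_of_le zero_lt_one (pos q).1, ?_⟩
  set N : ℕ → ℝ := fun q => 4 * a * lam + 4 * b * mu * (mu ^ 2) ^ q + mu ^ q with hN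
  set D : ℕ → ℝ := fun q => 4 * a + 4 * b * (mu ^ 2) ^ q + mu ^ q with hD
  have heq : ∀ q : ℕ, (H (q + 1) : ℝ) / (H q : ℝ) = N q / D q := by
    intro q
    have hlmq : lam ^ q * mu ^ q = 1 := by rw [← mul_pow, hlm, one_pow]
    have hnum : 4 * (a * lam ^ (q + 1) + b * mu ^ (q + 1)) + 1 = lam ^ q * N q := by
      simp only [hN]
      rw [pow_succ, pow_succ]
      linear_combination (-(4 * b * mu * mu ^ q) - 1) * hlmq
    have hden : 4 * (a * lam ^ q + b * mu ^ q) + 1 = lam ^ q * D q := by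
      simp only [hD]
      linear_combination (-(4 * b * mu ^ q) - 1) * hlmq
    have e1 : (H (q + 1) : ℝ) / (H q : ℝ) = (5 * (H (q + 1) : ℝ)) / (5 * (H q : ℝ)) :=
      (mul_div_mul_left _ _ (by norm_num)).symm
    rw [e1, closed, closed, hnum, hden]
    exact mul_div_mul_left _ _ (pow_ne_zero q (ne_of_gt hlampos))
  have hmu0 : Tendsto (fun q : ℕ => mu ^ q) atTop (𝓝 0) :=
    tendsto_pow_atTop_nhds_zero_of_lt_one hmupos.le hmu1
  have hmu20 : Tendsto (fun q : ℕ => (mu ^ 2) ^ q) atTop (𝓝 0) :=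
    tendsto_pow_atTop_nhds_zero_of_lt_one (by positivity) (by nlinarith [hmupos, hmu1])
  have hNt : Tendsto N atTop (𝓝 (4 * a * lam)) := by
    have : Tendsto N atTop (𝓝 (4 * a * lam + 4 * b * mu * 0 + 0)) :=
      (tendsto_const_nhds.add ((tendsto_const_nhds.mul hmu20))).add hmu0
    simpa using this
  have hDt : Tendsto D atTop (𝓝 (4 * a)) := by
    have : Tendsto D atTop (𝓝 (4 * a + 4 * b * 0 + 0)) :=
      (tendsto_const_nhds.add ((tendsto_const_nhds.mul hmu20))).add hmu0
    simpa using this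
  have hfin : Tendsto (fun q => N q / D q) atTop (𝓝 ((4 * a * lam) / (4 * a))) :=
    hNt.div hDt (ne_of_gt (by linarith [hapos]))
  have hval : (4 * a * lam) / (4 * a) = (17 + Real.sqrt 285) / 2 := by
    rw [mul_div_cancel_left₀ _ (ne_of_gt (by linarith [hapos] : (0:ℝ) < 4 * a))]
    rfl
  rw [← hval]
  exact hfin.congr (fun q => (heq q).symm)
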